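/- arXiv:1912.06807 — 3 statements merged into one kernel-verified Lean document; each statement's English description precedes it below -/
import Mathlib

section
/- Ankum's observation: for fixed d₁₂, d₁₃, d₂₃, d₁₄, d₂₄, d₃₄, the polynomial t ↦ CM(d₁₂, d₁₃, d₁₄+t, d₂₃, d₂₄+t, d₃₄+t) is a polynomial of degree at most 2 in t. -/
set_option maxHeartbeats 1000000


theorem det_fin_four {R : Type*} [CommRing R] (M : Matrix (Fin 4) (Fin 4) R) :
    M.det = M 0 0*M 1 1*M 2 2*M 3 3 - M 0 0*M 1 1*M 2 3*M 3 2 - M 0 0*M 1 2*M 2 1*M 3 3 + M 0 0*M 1 2*M 2 3*M 3 1 + M 0 0*M 1 3*M 2 1*M 3 2 - M 0 0*M 1 3*M 2 2*M 3 1 - M 0 1*M 1 0*M 2 2*M 3 3 + M 0 1*M 1 0*M 2 3*M 3 2 + M 0 1*M 1 2*M 2 0*M 3 3 - M 0 1*M 1 2*M 2 3*M 3 0 - M 0 1*M 1 3*M 2 0*M 3 2 + M 0 1*M 1 3*M 2 2*M 3 0 + M 0 2*M 1 0*M 2 1*M 3 3 - M 0 2*M 1 0*M 2 3*M 3 1 -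 M 0 2*M 1 1*M 2 0*M 3 3 + M 0 2*M 1 1*M 2 3*M 3 0 + M 0 2*M 1 3*M 2 0*M 3 1 - M 0 2*M 1 3*M 2 1*M 3 0 - M 0 3*M 1 0*M 2 1*M 3 2 + M 0 3*M 1 0*M 2 2*M 3 1 + M 0 3*M 1 1*M 2 0*M 3 2 - M 0 3*M 1 1*M 2 2*M 3 0 - M 0 3*M 1 2*M 2 0*M 3 1 + M 0 3*M 1 2*M 2 1*M 3 0 := by
  rw [Matrix.det_succ_row_zero]
  simp only [Fin.sum_univ_succ, Fin.sum_univ_zero, Matrix.det_fin_three,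
    Matrix.submatrix_apply, Fin.succ_zero_eq_one, Fin.succ_one_eq_two,
    Fin.val_zero, Fin.val_succ, pow_succ, pow_zero,
    show ((2:Fin 3).succ = 3) from rfl,
    show ((0:Fin 4).succAbove 0 = 1) by decide,
    show ((0:Fin 4).succAbove 1 = 2) by decide,
    show ((0:Fin 4).succAbove 2 = 3) by decide,
    show ((1:Fin 4).succAbove 0 = 0) by decide,
    show ((1:Fin 4).succAbove 1 = 2) by decide,
    show ((1:Fin 4).succAbove 2 = 3) by decide,
    show ((2:Fin 4).succAbove 0 = 0) by decide,
    show ((2:Fin 4).succAbove 1 = 1) by decide,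
    show ((2:Fin 4).succAbove 2 = 3) by decide,
    show ((3:Fin 4).succAbove 0 = 0) by decide,
    show ((3:Fin 4).succAbove 1 = 1) by decide,
    show ((3:Fin 4).succAbove 2 = 2) by decide]
  ring

theorem det_fin_five {R : Type*} [CommRing R] (M : Matrix (Fin 5) (Fin 5) R) :
    M.det = M 0 0*M 1 1*M 2 2*M 3 3*M 4 4 - M 0 0*M 1 1*M 2 2*M 3 4*M 4 3 - M 0 0*M 1 1*M 2 3*M 3 2*M 4 4 + M 0 0*M 1 1*M 2 3*M 3 4*M 4 2 + M 0 0*M 1 1*M 2 4*M 3 2*M 4 3 - M 0 0*M 1 1*M 2 4*M 3 3*M 4 2 - M 0 0*M 1 2*M 2 1*M 3 3*M 4 4 + M 0 0*M 1 2*M 2 1*M 3 4*M 4 3 + M 0 0*M 1 2*M 2 3*M 3 1*M 4 4 - M 0 0*M 1 2*M 2 3*M 3 4*M 4 1 - M 0 0*M 1 2*M 2 4*M 3 1*M 4 3 + M 0 0*M 1 2*M 2 4*M 3 3*M 4 1 + M 0 0*M 1 3*M 2 1*M 3 2*M 4 4 - M 0 0*M 1 3*M 2 1*M 3 4*M 4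 2 - M 0 0*M 1 3*M 2 2*M 3 1*M 4 4 + M 0 0*M 1 3*M 2 2*M 3 4*M 4 1 + M 0 0*M 1 3*M 2 4*M 3 1*M 4 2 - M 0 0*M 1 3*M 2 4*M 3 2*M 4 1 - M 0 0*M 1 4*M 2 1*M 3 2*M 4 3 + M 0 0*M 1 4*M 2 1*M 3 3*M 4 2 + M 0 0*M 1 4*M 2 2*M 3 1*M 4 3 - M 0 0*M 1 4*M 2 2*M 3 3*M 4 1 - M 0 0*M 1 4*M 2 3*M 3 1*M 4 2 + M 0 0*M 1 4*M 2 3*M 3 2*M 4 1 - M 0 1*M 1 0*M 2 2*M 3 3*M 4 4 + M 0 1*M 1 0*M 2 2*M 3 4*M 4 3 + M 0 1*M 1 0*M 2 3*M 3 2*M 4 4 - M 0 1*M 1 0*M 2 3*M 3 4*M 4 2 - M 0 1*M 1 0*M 2 4*M 3 2*M 4 3 + M 0 1*M 1 0*M 2 4*M 3 3*M 4 2 + M 0 1*M 1 2*M 2 0*M 3 3*M 4 4 - M 0 1*M 1 2*M 2 0*M 3 4*M 4 3 - M 0 1*M 1 2*M 2 3*M 3 0*M 4 4 + M 0 1*M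 1 2*M 2 3*M 3 4*M 4 0 + M 0 1*M 1 2*M 2 4*M 3 0*M 4 3 - M 0 1*M 1 2*M 2 4*M 3 3*M 4 0 - M 0 1*M 1 3*M 2 0*M 3 2*M 4 4 + M 0 1*M 1 3*M 2 0*M 3 4*M 4 2 + M 0 1*M 1 3*M 2 2*M 3 0*M 4 4 - M 0 1*M 1 3*M 2 2*M 3 4*M 4 0 - M 0 1*M 1 3*M 2 4*M 3 0*M 4 2 + M 0 1*M 1 3*M 2 4*M 3 2*M 4 0 + M 0 1*M 1 4*M 2 0*M 3 2*M 4 3 - M 0 1*M 1 4*M 2 0*M 3 3*M 4 2 - M 0 1*M 1 4*M 2 2*M 3 0*M 4 3 + M 0 1*M 1 4*M 2 2*M 3 3*M 4 0 + M 0 1*M 1 4*M 2 3*M 3 0*M 4 2 - M 0 1*M 1 4*M 2 3*M 3 2*M 4 0 + M 0 2*M 1 0*M 2 1*M 3 3*M 4 4 - M 0 2*M 1 0*M 2 1*M 3 4*M 4 3 - M 0 2*M 1 0*M 2 3*M 3 1*M 4 4 + M 0 2*M 1 0*M 2 3*M 3 4*M 4 1 + M 0 2*M 1 0*M 2 4*M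 3 1*M 4 3 - M 0 2*M 1 0*M 2 4*M 3 3*M 4 1 - M 0 2*M 1 1*M 2 0*M 3 3*M 4 4 + M 0 2*M 1 1*M 2 0*M 3 4*M 4 3 + M 0 2*M 1 1*M 2 3*M 3 0*M 4 4 - M 0 2*M 1 1*M 2 3*M 3 4*M 4 0 - M 0 2*M 1 1*M 2 4*M 3 0*M 4 3 + M 0 2*M 1 1*M 2 4*M 3 3*M 4 0 + M 0 2*M 1 3*M 2 0*M 3 1*M 4 4 - M 0 2*M 1 3*M 2 0*M 3 4*M 4 1 - M 0 2*M 1 3*M 2 1*M 3 0*M 4 4 + M 0 2*M 1 3*M 2 1*M 3 4*M 4 0 + M 0 2*M 1 3*M 2 4*M 3 0*M 4 1 - M 0 2*M 1 3*M 2 4*M 3 1*M 4 0 - M 0 2*M 1 4*M 2 0*M 3 1*M 4 3 + M 0 2*M 1 4*M 2 0*M 3 3*M 4 1 + M 0 2*M 1 4*M 2 1*M 3 0*M 4 3 - M 0 2*M 1 4*M 2 1*M 3 3*M 4 0 - M 0 2*M 1 4*M 2 3*M 3 0*M 4 1 + M 0 2*M 1 4*M 2 3*M 3 1*M 4 0 -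 M 0 3*M 1 0*M 2 1*M 3 2*M 4 4 + M 0 3*M 1 0*M 2 1*M 3 4*M 4 2 + M 0 3*M 1 0*M 2 2*M 3 1*M 4 4 - M 0 3*M 1 0*M 2 2*M 3 4*M 4 1 - M 0 3*M 1 0*M 2 4*M 3 1*M 4 2 + M 0 3*M 1 0*M 2 4*M 3 2*M 4 1 + M 0 3*M 1 1*M 2 0*M 3 2*M 4 4 - M 0 3*M 1 1*M 2 0*M 3 4*M 4 2 - M 0 3*M 1 1*M 2 2*M 3 0*M 4 4 + M 0 3*M 1 1*M 2 2*M 3 4*M 4 0 + M 0 3*M 1 1*M 2 4*M 3 0*M 4 2 - M 0 3*M 1 1*M 2 4*M 3 2*M 4 0 - M 0 3*M 1 2*M 2 0*M 3 1*M 4 4 + M 0 3*M 1 2*M 2 0*M 3 4*M 4 1 + M 0 3*M 1 2*M 2 1*M 3 0*M 4 4 - M 0 3*M 1 2*M 2 1*M 3 4*M 4 0 - M 0 3*M 1 2*M 2 4*M 3 0*M 4 1 + M 0 3*M 1 2*M 2 4*M 3 1*M 4 0 + M 0 3*M 1 4*M 2 0*M 3 1*M 4 2 - M 0 3*M 1 4*M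 2 0*M 3 2*M 4 1 - M 0 3*M 1 4*M 2 1*M 3 0*M 4 2 + M 0 3*M 1 4*M 2 1*M 3 2*M 4 0 + M 0 3*M 1 4*M 2 2*M 3 0*M 4 1 - M 0 3*M 1 4*M 2 2*M 3 1*M 4 0 + M 0 4*M 1 0*M 2 1*M 3 2*M 4 3 - M 0 4*M 1 0*M 2 1*M 3 3*M 4 2 - M 0 4*M 1 0*M 2 2*M 3 1*M 4 3 + M 0 4*M 1 0*M 2 2*M 3 3*M 4 1 + M 0 4*M 1 0*M 2 3*M 3 1*M 4 2 - M 0 4*M 1 0*M 2 3*M 3 2*M 4 1 - M 0 4*M 1 1*M 2 0*M 3 2*M 4 3 + M 0 4*M 1 1*M 2 0*M 3 3*M 4 2 + M 0 4*M 1 1*M 2 2*M 3 0*M 4 3 - M 0 4*M 1 1*M 2 2*M 3 3*M 4 0 - M 0 4*M 1 1*M 2 3*M 3 0*M 4 2 + M 0 4*M 1 1*M 2 3*M 3 2*M 4 0 + M 0 4*M 1 2*M 2 0*M 3 1*M 4 3 - M 0 4*M 1 2*M 2 0*M 3 3*M 4 1 - M 0 4*M 1 2*M 2 1*M 3 0*M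 4 3 + M 0 4*M 1 2*M 2 1*M 3 3*M 4 0 + M 0 4*M 1 2*M 2 3*M 3 0*M 4 1 - M 0 4*M 1 2*M 2 3*M 3 1*M 4 0 - M 0 4*M 1 3*M 2 0*M 3 1*M 4 2 + M 0 4*M 1 3*M 2 0*M 3 2*M 4 1 + M 0 4*M 1 3*M 2 1*M 3 0*M 4 2 - M 0 4*M 1 3*M 2 1*M 3 2*M 4 0 - M 0 4*M 1 3*M 2 2*M 3 0*M 4 1 + M 0 4*M 1 3*M 2 2*M 3 1*M 4 0 := by
  rw [Matrix.det_succ_row_zero]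
  simp only [Fin.sum_univ_succ, Fin.sum_univ_zero, det_fin_four,
    Matrix.submatrix_apply, Fin.succ_zero_eq_one, Fin.succ_one_eq_two,
    Fin.val_zero, Fin.val_succ, pow_succ, pow_zero,
    show ((2:Fin 3).succ = 3) from rfl, show ((3:Fin 4).succ = 4) from rfl,
    show ((2:Fin 4).succ = 3) from rfl,
    show ((0:Fin 5).succAbove 0 = 1) by decide,
    show ((0:Fin 5).succAbove 1 = 2) by decide,
    show ((0:Fin 5).succAbove 2 = 3) by decide,
    show ((0:Fin 5).succAbove 3 = 4) by decide,
    show ((1:Fin 5).succAbove 0 = 0) by decide,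
    show ((1:Fin 5).succAbove 1 = 2) by decide,
    show ((1:Fin 5).succAbove 2 = 3) by decide,
    show ((1:Fin 5).succAbove 3 = 4) by decide,
    show ((2:Fin 5).succAbove 0 = 0) by decide,
    show ((2:Fin 5).succAbove 1 = 1) by decide,
    show ((2:Fin 5).succAbove 2 = 3) by decide,
    show ((2:Fin 5).succAbove 3 = 4) by decide,
    show ((3:Fin 5).succAbove 0 = 0) by decide,
    show ((3:Fin 5).succAbove 1 = 1) by decide,
    show ((3:Fin 5).succAbove 2 = 2) by decide,
    show ((3:Fin 5).succAbove 3 = 4) by decide,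
    show ((4:Fin 5).succAbove 0 = 0) by decide,
    show ((4:Fin 5).succAbove 1 = 1) by decide,
    show ((4:Fin 5).succAbove 2 = 2) by decide,
    show ((4:Fin 5).succAbove 3 = 3) by decide]
  ring


/-- Half the 5×5 Cayley–Menger determinant. -/
noncomputable def CM (x12 x13 x14 x23 x24 x34 : ℝ) : ℝ :=
  Matrix.det !![(0 : ℝ), 1, 1, 1, 1;
                1, 0, x12^2, x13^2, x14^2;
                1, x12^2, 0, x23^2, x24^2;
                1, x13^2, x23^2, 0, x34^2;
                1, x14^2, x24^2, x34^2, 0] / 2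

/-- Ankum's observation: `t ↦ CM(d₁₂, d₁₃, d₁₄+t, d₂₃, d₂₄+t, d₃₄+t)` is a
polynomial of degree at most 2 in `t`. -/
theorem ankum_observation (d12 d13 d14 d23 d24 d34 : ℝ) :
    ∃ α β γ : ℝ, ∀ t : ℝ,
      CM d12 d13 (d14 + t) d23 (d24 + t) (d34 + t) = α * t^2 + β * t + γ := by
  refine ⟨(-4)*d23^2*d24*d34 + (-1)*d23^4 + (4)*d14*d23^2*d34 + (4)*d14*d23^2*d24 + (-4)*d14^2*d23^2 + (4)*d13^2*d24*d34 + (-4)*d13^2*d24^2 + (2)*d13^2*d23^2 + (-4)*d13^2*d14*d34 + (4)*d13^2*d14*d24 + (-1)*d13^4 + (-4)*d12^2*d34^2 + (4)*d12^2*d24*d34 + (2)*d12^2*d23^2 + (4)*d12^2*d14*d34 + (-4)*d12^2*d14*d24 + (2)*d12^2*d13^2 + (-1)*d12^4,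
    (-2)*d23^2*d24*d34^2 + (-2)*d23^2*d24^2*d34 + (2)*d14*d23^2*d34^2 + (2)*d14*d23^2*d24^2 + (-2)*d14*d23^4 + (2)*d14^2*d23^2*d34 + (2)*d14^2*d23^2*d24 + (-4)*d14^3*d23^2 + (2)*d13^2*d24*d34^2 + (2)*d13^2*d24^2*d34 + (-4)*d13^2*d24^3 + (2)*d13^2*d23^2*d24 + (-2)*d13^2*d14*d34^2 + (2)*d13^2*d14*d24^2 + (2)*d13^2*d14*d23^2 + (-2)*d13^2*d14^2*d34 + (2)*d13^2*d14^2*d24 + (-2)*d13^4*d24 + (-4)*d12^2*d34^3 + (2)*d12^2*d24*d34^2 + (2)*d12^2*d24^2*d34 + (2)*d12^2*d23^2*d34 + (2)*d12^2*d14*d34^2 + (-2)*d12^2*d14*d24^2 + (2)*d12^2*d14*d23^2 + (2)*d12^2*d14^2*d34 + (-2)*d12^2*d14^2*d24 + (2)*d12^2*d13^2*d34 + (2)*d12^2*d13^2*d24 + (-2)*d12^4*d34,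
    (-1)*d23^2*d24^2*d34^2 + (1)*d14^2*d23^2*d34^2 + (1)*d14^2*d23^2*d24^2 + (-1)*d14^2*d23^4 + (-1)*d14^4*d23^2 + (1)*d13^2*d24^2*d34^2 + (-1)*d13^2*d24^4 + (1)*d13^2*d23^2*d24^2 + (-1)*d13^2*d14^2*d34^2 + (1)*d13^2*d14^2*d24^2 + (1)*d13^2*d14^2*d23^2 + (-1)*d13^4*d24^2 + (-1)*d12^2*d34^4 + (1)*d12^2*d24^2*d34^2 + (1)*d12^2*d23^2*d34^2 + (1)*d12^2*d14^2*d34^2 + (-1)*d12^2*d14^2*d24^2 + (1)*d12^2*d14^2*d23^2 + (1)*d12^2*d13^2*d34^2 + (1)*d12^2*d13^2*d24^2 + (-1)*d12^2*d13^2*d23^2 + (-1)*d12^4*d34^2, ?_⟩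
  intro t
  rw [CM, det_fin_five]
  simp only [Fin.isValue, Matrix.of_apply, Matrix.cons_val', Matrix.cons_val_zero,
    Matrix.empty_val', Matrix.cons_val_fin_one, Matrix.cons_val_one, Matrix.head_cons,
    Matrix.cons_val_two, Nat.succ_eq_add_one, Nat.reduceAdd, Matrix.tail_cons,
    Matrix.cons_val_three, Matrix.cons_val_four, Matrix.head_fin_const,
    Matrix.tail_val', Matrix.head_val']
  ring
end

section
/- Neiss' identity: H(d₁₂,d₁₃,d₂₃)·H(d₁₂,d₂₄,d₁₄) = D₁₂² + (2d₁₂)²·CM(d₁₂,d₁₃,d₁₄,d₂₃,d₂₄,d₃₄), where D₁₂ is the determinant of the 4×4 matrix [[0,1,1,1],[1,0,d₁₂²,d₁₄²],[1,d₁₂²,0,d₂₄²],[1,d₁₃²,d₂₃²,d₃₄²]]. -/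
set_option maxRecDepth 10000
set_option maxHeartbeats 10000000
open Matrix
lemma det_four (A : Matrix (Fin 4) (Fin 4) ℝ) : A.det =
    A 0 0 * (A 1 1 * (A 2 2 * A 3 3 - A 2 3 * A 3 2) - A 1 2 * (A 2 1 * A 3 3 - A 2 3 * A 3 1) + A 1 3 * (A 2 1 * A 3 2 - A 2 2 * A 3 1))
  - A 0 1 * (A 1 0 * (A 2 2 * A 3 3 - A 2 3 * A 3 2) - A 1 2 * (A 2 0 * A 3 3 - A 2 3 * A 3 0) + A 1 3 * (A 2 0 * A 3 2 - A 2 2 * A 3 0))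
  + A 0 2 * (A 1 0 * (A 2 1 * A 3 3 - A 2 3 * A 3 1) - A 1 1 * (A 2 0 * A 3 3 - A 2 3 * A 3 0) + A 1 3 * (A 2 0 * A 3 1 - A 2 1 * A 3 0))
  - A 0 3 * (A 1 0 * (A 2 1 * A 3 2 - A 2 2 * A 3 1) - A 1 1 * (A 2 0 * A 3 2 - A 2 2 * A 3 0) + A 1 2 * (A 2 0 * A 3 1 - A 2 1 * A 3 0)) := by
  rw [Matrix.det_succ_row_zero]
  simp [Fin.sum_univ_succ, Matrix.det_fin_three, Fin.succAbove, -Fin.val_fin_lt, show (Fin.succ 2 : Fin 4) = 3 from rfl, show (Fin.castSucc 2 : Fin 4) = 2 from rfl]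
  ring
lemma det_five (A : Matrix (Fin 5) (Fin 5) ℝ) : A.det =
    A 0 0*A 1 1*A 2 2*A 3 3*A 4 4 - A 0 0*A 1 1*A 2 2*A 3 4*A 4 3 - A 0 0*A 1 1*A 2 3*A 3 2*A 4 4 + A 0 0*A 1 1*A 2 3*A 3 4*A 4 2 + A 0 0*A 1 1*A 2 4*A 3 2*A 4 3 - A 0 0*A 1 1*A 2 4*A 3 3*A 4 2 - A 0 0*A 1 2*A 2 1*A 3 3*A 4 4 + A 0 0*A 1 2*A 2 1*A 3 4*A 4 3 + A 0 0*A 1 2*A 2 3*A 3 1*A 4 4 - A 0 0*A 1 2*A 2 3*A 3 4*A 4 1 - A 0 0*A 1 2*A 2 4*A 3 1*A 4 3 + A 0 0*A 1 2*A 2 4*A 3 3*A 4 1 + A 0 0*A 1 3*A 2 1*A 3 2*A 4 4 - A 0 0*A 1 3*A 2 1*A 3 4*A 4 2 - A 0 0*A 1 3*A 2 2*A 3 1*A 4 4 + A 0 0*A 1 3*A 2 2*A 3 4*A 4 1 + A 0 0*A 1 3*A 2 4*A 3 1*A 4 2 - A 0 0*A 1 3*A 2 4*A 3 2*A 4 1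 - A 0 0*A 1 4*A 2 1*A 3 2*A 4 3 + A 0 0*A 1 4*A 2 1*A 3 3*A 4 2 + A 0 0*A 1 4*A 2 2*A 3 1*A 4 3 - A 0 0*A 1 4*A 2 2*A 3 3*A 4 1 - A 0 0*A 1 4*A 2 3*A 3 1*A 4 2 + A 0 0*A 1 4*A 2 3*A 3 2*A 4 1 - A 0 1*A 1 0*A 2 2*A 3 3*A 4 4 + A 0 1*A 1 0*A 2 2*A 3 4*A 4 3 + A 0 1*A 1 0*A 2 3*A 3 2*A 4 4 - A 0 1*A 1 0*A 2 3*A 3 4*A 4 2 - A 0 1*A 1 0*A 2 4*A 3 2*A 4 3 + A 0 1*A 1 0*A 2 4*A 3 3*A 4 2 + A 0 1*A 1 2*A 2 0*A 3 3*A 4 4 - A 0 1*A 1 2*A 2 0*A 3 4*A 4 3 - A 0 1*A 1 2*A 2 3*A 3 0*A 4 4 + A 0 1*A 1 2*A 2 3*A 3 4*A 4 0 + A 0 1*A 1 2*A 2 4*A 3 0*A 4 3 - A 0 1*A 1 2*A 2 4*A 3 3*A 4 0 - A 0 1*A 1 3*A 2 0*A 3 2*A 4 4 + A 0 1*A 1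 3*A 2 0*A 3 4*A 4 2 + A 0 1*A 1 3*A 2 2*A 3 0*A 4 4 - A 0 1*A 1 3*A 2 2*A 3 4*A 4 0 - A 0 1*A 1 3*A 2 4*A 3 0*A 4 2 + A 0 1*A 1 3*A 2 4*A 3 2*A 4 0 + A 0 1*A 1 4*A 2 0*A 3 2*A 4 3 - A 0 1*A 1 4*A 2 0*A 3 3*A 4 2 - A 0 1*A 1 4*A 2 2*A 3 0*A 4 3 + A 0 1*A 1 4*A 2 2*A 3 3*A 4 0 + A 0 1*A 1 4*A 2 3*A 3 0*A 4 2 - A 0 1*A 1 4*A 2 3*A 3 2*A 4 0 + A 0 2*A 1 0*A 2 1*A 3 3*A 4 4 - A 0 2*A 1 0*A 2 1*A 3 4*A 4 3 - A 0 2*A 1 0*A 2 3*A 3 1*A 4 4 + A 0 2*A 1 0*A 2 3*A 3 4*A 4 1 + A 0 2*A 1 0*A 2 4*A 3 1*A 4 3 - A 0 2*A 1 0*A 2 4*A 3 3*A 4 1 - A 0 2*A 1 1*A 2 0*A 3 3*A 4 4 + A 0 2*A 1 1*A 2 0*A 3 4*A 4 3 + A 0 2*A 1 1*A 2 3*A 3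 0*A 4 4 - A 0 2*A 1 1*A 2 3*A 3 4*A 4 0 - A 0 2*A 1 1*A 2 4*A 3 0*A 4 3 + A 0 2*A 1 1*A 2 4*A 3 3*A 4 0 + A 0 2*A 1 3*A 2 0*A 3 1*A 4 4 - A 0 2*A 1 3*A 2 0*A 3 4*A 4 1 - A 0 2*A 1 3*A 2 1*A 3 0*A 4 4 + A 0 2*A 1 3*A 2 1*A 3 4*A 4 0 + A 0 2*A 1 3*A 2 4*A 3 0*A 4 1 - A 0 2*A 1 3*A 2 4*A 3 1*A 4 0 - A 0 2*A 1 4*A 2 0*A 3 1*A 4 3 + A 0 2*A 1 4*A 2 0*A 3 3*A 4 1 + A 0 2*A 1 4*A 2 1*A 3 0*A 4 3 - A 0 2*A 1 4*A 2 1*A 3 3*A 4 0 - A 0 2*A 1 4*A 2 3*A 3 0*A 4 1 + A 0 2*A 1 4*A 2 3*A 3 1*A 4 0 - A 0 3*A 1 0*A 2 1*A 3 2*A 4 4 + A 0 3*A 1 0*A 2 1*A 3 4*A 4 2 + A 0 3*A 1 0*A 2 2*A 3 1*A 4 4 - A 0 3*A 1 0*A 2 2*A 3 4*A 4 1 - A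 0 3*A 1 0*A 2 4*A 3 1*A 4 2 + A 0 3*A 1 0*A 2 4*A 3 2*A 4 1 + A 0 3*A 1 1*A 2 0*A 3 2*A 4 4 - A 0 3*A 1 1*A 2 0*A 3 4*A 4 2 - A 0 3*A 1 1*A 2 2*A 3 0*A 4 4 + A 0 3*A 1 1*A 2 2*A 3 4*A 4 0 + A 0 3*A 1 1*A 2 4*A 3 0*A 4 2 - A 0 3*A 1 1*A 2 4*A 3 2*A 4 0 - A 0 3*A 1 2*A 2 0*A 3 1*A 4 4 + A 0 3*A 1 2*A 2 0*A 3 4*A 4 1 + A 0 3*A 1 2*A 2 1*A 3 0*A 4 4 - A 0 3*A 1 2*A 2 1*A 3 4*A 4 0 - A 0 3*A 1 2*A 2 4*A 3 0*A 4 1 + A 0 3*A 1 2*A 2 4*A 3 1*A 4 0 + A 0 3*A 1 4*A 2 0*A 3 1*A 4 2 - A 0 3*A 1 4*A 2 0*A 3 2*A 4 1 - A 0 3*A 1 4*A 2 1*A 3 0*A 4 2 + A 0 3*A 1 4*A 2 1*A 3 2*A 4 0 + A 0 3*A 1 4*A 2 2*A 3 0*A 4 1 - A 0 3*A 1 4*A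 2 2*A 3 1*A 4 0 + A 0 4*A 1 0*A 2 1*A 3 2*A 4 3 - A 0 4*A 1 0*A 2 1*A 3 3*A 4 2 - A 0 4*A 1 0*A 2 2*A 3 1*A 4 3 + A 0 4*A 1 0*A 2 2*A 3 3*A 4 1 + A 0 4*A 1 0*A 2 3*A 3 1*A 4 2 - A 0 4*A 1 0*A 2 3*A 3 2*A 4 1 - A 0 4*A 1 1*A 2 0*A 3 2*A 4 3 + A 0 4*A 1 1*A 2 0*A 3 3*A 4 2 + A 0 4*A 1 1*A 2 2*A 3 0*A 4 3 - A 0 4*A 1 1*A 2 2*A 3 3*A 4 0 - A 0 4*A 1 1*A 2 3*A 3 0*A 4 2 + A 0 4*A 1 1*A 2 3*A 3 2*A 4 0 + A 0 4*A 1 2*A 2 0*A 3 1*A 4 3 - A 0 4*A 1 2*A 2 0*A 3 3*A 4 1 - A 0 4*A 1 2*A 2 1*A 3 0*A 4 3 + A 0 4*A 1 2*A 2 1*A 3 3*A 4 0 + A 0 4*A 1 2*A 2 3*A 3 0*A 4 1 - A 0 4*A 1 2*A 2 3*A 3 1*A 4 0 - A 0 4*A 1 3*A 2 0*A 3 1*A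 4 2 + A 0 4*A 1 3*A 2 0*A 3 2*A 4 1 + A 0 4*A 1 3*A 2 1*A 3 0*A 4 2 - A 0 4*A 1 3*A 2 1*A 3 2*A 4 0 - A 0 4*A 1 3*A 2 2*A 3 0*A 4 1 + A 0 4*A 1 3*A 2 2*A 3 1*A 4 0 := by
  rw [Matrix.det_succ_row_zero, Fin.sum_univ_five]
  simp only [det_four, Matrix.submatrix_apply,
    show (((0:Fin 5)).succAbove 0 : Fin 5) = 1 from rfl,
    show (((0:Fin 5)).succAbove 1 : Fin 5) = 2 from rfl,
    show (((0:Fin 5)).succAbove 2 : Fin 5) = 3 from rfl,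
    show (((0:Fin 5)).succAbove 3 : Fin 5) = 4 from rfl,
    show (((1:Fin 5)).succAbove 0 : Fin 5) = 0 from rfl,
    show (((1:Fin 5)).succAbove 1 : Fin 5) = 2 from rfl,
    show (((1:Fin 5)).succAbove 2 : Fin 5) = 3 from rfl,
    show (((1:Fin 5)).succAbove 3 : Fin 5) = 4 from rfl,
    show (((2:Fin 5)).succAbove 0 : Fin 5) = 0 from rfl,
    show (((2:Fin 5)).succAbove 1 : Fin 5) = 1 from rfl,
    show (((2:Fin 5)).succAbove 2 : Fin 5) = 3 from rfl,
    show (((2:Fin 5)).succAbove 3 : Fin 5) = 4 from rfl,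
    show (((3:Fin 5)).succAbove 0 : Fin 5) = 0 from rfl,
    show (((3:Fin 5)).succAbove 1 : Fin 5) = 1 from rfl,
    show (((3:Fin 5)).succAbove 2 : Fin 5) = 2 from rfl,
    show (((3:Fin 5)).succAbove 3 : Fin 5) = 4 from rfl,
    show (((4:Fin 5)).succAbove 0 : Fin 5) = 0 from rfl,
    show (((4:Fin 5)).succAbove 1 : Fin 5) = 1 from rfl,
    show (((4:Fin 5)).succAbove 2 : Fin 5) = 2 from rfl,
    show (((4:Fin 5)).succAbove 3 : Fin 5) = 3 from rfl,
    show (Fin.succ 0 : Fin 5) = 1 from rfl,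
    show (Fin.succ 1 : Fin 5) = 2 from rfl,
    show (Fin.succ 2 : Fin 5) = 3 from rfl,
    show (Fin.succ 3 : Fin 5) = 4 from rfl]
  simp only [show (((0:Fin 5)):ℕ) = 0 from rfl,
    show (((1:Fin 5)):ℕ) = 1 from rfl,
    show (((2:Fin 5)):ℕ) = 2 from rfl,
    show (((3:Fin 5)):ℕ) = 3 from rfl,
    show (((4:Fin 5)):ℕ) = 4 from rfl]
  norm_num
  ring

/-- The Heron polynomial. -/
def H (a b c : ℝ) : ℝ := 2*a^2*b^2 + 2*b^2*c^2 + 2*c^2*a^2 - a^4 - b^4 - c^4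

/-- The auxiliary 4×4 determinant `D₁₂`. -/
def D12 (d12 d13 d14 d23 d24 d34 : ℝ) : ℝ :=
  Matrix.det !![(0 : ℝ), 1, 1, 1;
                1, 0, d12^2, d14^2;
                1, d12^2, 0, d24^2;
                1, d13^2, d23^2, d34^2]

/-- Neiss' identity. -/
theorem neiss_identity (d12 d13 d14 d23 d24 d34 : ℝ) :
    H d12 d13 d23 * H d12 d24 d14 =
      (D12 d12 d13 d14 d23 d24 d34)^2 +
        (2 * d12)^2 * CM d12 d13 d14 d23 d24 d34 := by
  simp only [H, D12, CM, det_four, det_five, Matrix.cons_val_zero, Matrix.cons_val_one,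
    Matrix.cons_val_two, Matrix.cons_val_three, Matrix.cons_val_four, Matrix.head_cons,
    Matrix.tail_cons, Matrix.of_apply, Matrix.cons_val', Matrix.empty_val', Matrix.cons_val_fin_one, Matrix.head_fin_const]
  ring
end

section
/- If CM(d₁₂,d₁₃,d₁₄,d₂₃,d₂₄,d₃₄) = 0 and both H(d₁₂,d₁₃,d₂₃) and H(d₁₂,d₂₄,d₁₄) are nonzero, then H(d₁₂,d₁₃,d₂₃)·H(d₁₂,d₂₄,d₁₄) is a square in the field; hence H(d₁₂,d₁₃,d₂₃) and H(d₁₂,d₂₄,d₁₄) lie in the same square class of k^×/k^{×2}. -/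
set_option maxRecDepth 100000
set_option maxHeartbeats 2000000
set_option maxRecDepth 100000
theorem det4e {R : Type*} [CommRing R] (A : Matrix (Fin 4) (Fin 4) R) :
    Matrix.det A =
      A 0 0 * (A 1 1 * A 2 2 * A 3 3 - A 1 1 * A 2 3 * A 3 2 - A 1 2 * A 2 1 * A 3 3
        + A 1 2 * A 2 3 * A 3 1 + A 1 3 * A 2 1 * A 3 2 - A 1 3 * A 2 2 * A 3 1)
      - A 0 1 * (A 1 0 * A 2 2 * A 3 3 - A 1 0 * A 2 3 * A 3 2 - A 1 2 * A 2 0 * A 3 3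
        + A 1 2 * A 2 3 * A 3 0 + A 1 3 * A 2 0 * A 3 2 - A 1 3 * A 2 2 * A 3 0)
      + A 0 2 * (A 1 0 * A 2 1 * A 3 3 - A 1 0 * A 2 3 * A 3 1 - A 1 1 * A 2 0 * A 3 3
        + A 1 1 * A 2 3 * A 3 0 + A 1 3 * A 2 0 * A 3 1 - A 1 3 * A 2 1 * A 3 0)
      - A 0 3 * (A 1 0 * A 2 1 * A 3 2 - A 1 0 * A 2 2 * A 3 1 - A 1 1 * A 2 0 * A 3 2
        + A 1 1 * A 2 2 * A 3 0 + A 1 2 * A 2 0 * A 3 1 - A 1 2 * A 2 1 * A 3 0) := by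
  rw [Matrix.det_succ_row_zero]
  simp [Fin.sum_univ_succ, Matrix.det_fin_three, Fin.succAbove,
    show ((2:Fin 3).succ)=(3:Fin 4) by decide, show ((2:Fin 3).castSucc)=(2:Fin 4) by decide]
  ring

theorem my_det_fin_five {R : Type*} [CommRing R] (A : Matrix (Fin 5) (Fin 5) R) :
    Matrix.det A =
      A 0 0 * Matrix.det (A.submatrix Fin.succ (Fin.succAbove 0))
      - A 0 1 * Matrix.det (A.submatrix Fin.succ (Fin.succAbove 1))
      + A 0 2 * Matrix.det (A.submatrix Fin.succ (Fin.succAbove 2))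
      - A 0 3 * Matrix.det (A.submatrix Fin.succ (Fin.succAbove 3))
      + A 0 4 * Matrix.det (A.submatrix Fin.succ (Fin.succAbove 4)) := by
  rw [Matrix.det_succ_row_zero]
  simp [Fin.sum_univ_succ, show ((2:Fin 3).succ.succ) = (4:Fin 5) by decide,
    show ((2:Fin 4).succ) = (3:Fin 5) by decide,
    show (0 : Fin 5).succAbove = Fin.succ from rfl]
  ring

/-- If the Cayley–Menger function vanishes (the planar-quadrilateral case) and
the two Heron values are nonzero, then their product is a square, i.e. the two
Heron values lie in the same square class of `k^×/k^{×2}`. -/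
theorem same_square_class {k : Type*} [Field k] [CharZero k]
    (H : k → k → k → k)
    (hH : ∀ a b c, H a b c = 2*a^2*b^2 + 2*b^2*c^2 + 2*c^2*a^2 - a^4 - b^4 - c^4)
    (CM : k → k → k → k → k → k → k)
    (hCM : ∀ x12 x13 x14 x23 x24 x34, CM x12 x13 x14 x23 x24 x34 =
      Matrix.det !![(0 : k), 1, 1, 1, 1;
                    1, 0, x12^2, x13^2, x14^2;
                    1, x12^2, 0, x23^2, x24^2;
                    1, x13^2, x23^2, 0, x34^2;
                    1, x14^2, x24^2, x34^2, 0] / 2)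
    (d12 d13 d14 d23 d24 d34 : k)
    (hzero : CM d12 d13 d14 d23 d24 d34 = 0)
    (h1 : H d12 d13 d23 ≠ 0) (h2 : H d12 d24 d14 ≠ 0) :
    ∃ z : k, H d12 d13 d23 * H d12 d24 d14 = z^2 := by
  refine ⟨d12^2*(d13^2+d23^2+d14^2+d24^2-d12^2-2*d34^2)+(d13^2-d23^2)*(d24^2-d14^2), ?_⟩
  have h := hCM d12 d13 d14 d23 d24 d34
  rw [hzero] at h
  have hdet : Matrix.det !![(0 : k), 1, 1, 1, 1;
                    1, 0, d12^2, d13^2, d14^2;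
                    1, d12^2, 0, d23^2, d24^2;
                    1, d13^2, d23^2, 0, d34^2;
                    1, d14^2, d24^2, d34^2, 0] = 0 := by
    field_simp at h
    linear_combination -h
  have s0 : (!![(0 : k), 1, 1, 1, 1;
                    1, 0, d12^2, d13^2, d14^2;
                    1, d12^2, 0, d23^2, d24^2;
                    1, d13^2, d23^2, 0, d34^2;
                    1, d14^2, d24^2, d34^2, 0]).submatrix Fin.succ (Fin.succAbove 0) = !![0, d12^2, d13^2, d14^2; d12^2, 0, d23^2, d24^2; d13^2, d23^2, 0, d34^2; d14^2, d24^2, d34^2, 0] := by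
    ext i jj; fin_cases i <;> fin_cases jj <;> rfl
  have s1 : (!![(0 : k), 1, 1, 1, 1;
                    1, 0, d12^2, d13^2, d14^2;
                    1, d12^2, 0, d23^2, d24^2;
                    1, d13^2, d23^2, 0, d34^2;
                    1, d14^2, d24^2, d34^2, 0]).submatrix Fin.succ (Fin.succAbove 1) = !![1, d12^2, d13^2, d14^2; 1, 0, d23^2, d24^2; 1, d23^2, 0, d34^2; 1, d24^2, d34^2, 0] := by
    ext i jj; fin_cases i <;> fin_cases jj <;> rfl
  have s2 : (!![(0 : k), 1, 1, 1, 1;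
                    1, 0, d12^2, d13^2, d14^2;
                    1, d12^2, 0, d23^2, d24^2;
                    1, d13^2, d23^2, 0, d34^2;
                    1, d14^2, d24^2, d34^2, 0]).submatrix Fin.succ (Fin.succAbove 2) = !![1, 0, d13^2, d14^2; 1, d12^2, d23^2, d24^2; 1, d13^2, 0, d34^2; 1, d14^2, d34^2, 0] := by
    ext i jj; fin_cases i <;> fin_cases jj <;> rfl
  have s3 : (!![(0 : k), 1, 1, 1, 1;
                    1, 0, d12^2, d13^2, d14^2;
                    1, d12^2, 0, d23^2, d24^2;
                    1, d13^2, d23^2, 0, d34^2;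
                    1, d14^2, d24^2, d34^2, 0]).submatrix Fin.succ (Fin.succAbove 3) = !![1, 0, d12^2, d14^2; 1, d12^2, 0, d24^2; 1, d13^2, d23^2, d34^2; 1, d14^2, d24^2, 0] := by
    ext i jj; fin_cases i <;> fin_cases jj <;> rfl
  have s4 : (!![(0 : k), 1, 1, 1, 1;
                    1, 0, d12^2, d13^2, d14^2;
                    1, d12^2, 0, d23^2, d24^2;
                    1, d13^2, d23^2, 0, d34^2;
                    1, d14^2, d24^2, d34^2, 0]).submatrix Fin.succ (Fin.succAbove 4) = !![1, 0, d12^2, d13^2; 1, d12^2, 0, d23^2; 1, d13^2, d23^2, 0; 1, d14^2, d24^2, d34^2] := by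
    ext i jj; fin_cases i <;> fin_cases jj <;> rfl
  rw [my_det_fin_five, s0, s1, s2, s3, s4, det4e, det4e, det4e, det4e, det4e] at hdet
  simp [Matrix.vecHead, Matrix.vecTail, Function.comp] at hdet
  rw [hH, hH]
  linear_combination (2*d12^2) * hdet
end
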